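/- Let F : Ω → ℝ² be a map differentiable at x with Jacobian matrix DF(x) and Jacobian determinant J_F(x) = det DF(x) > 0, and let σ₀ be a symmetric 2×2 matrix satisfying C₀⁻¹I ≤ σ₀ ≤ C₀I. Suppose the push-forward matrix σ₁ = J_F(x)⁻¹ DF(x) σ₀ DF(x)ᵗ satisfies C₁⁻¹I ≤ σ₁ ≤ C₁I. Then ‖DF(x)‖² ≤ K J_F(x) with K = C₀C₁, where ‖·‖ denotes the operator norm. -/

import Mathlib

open Matrix

theorem quasiconformality_from_pushforward (A σ0 σ1 : Matrix (Fin 2) (Fin 2) ℝ)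
    (C0 C1 : ℝ) (hC0 : 1 ≤ C0) (hC1 : 1 ≤ C1)
    (hdet : 0 < A.det) (hA : IsUnit A.det)
    (hσ0sym : σ0.IsSymm)
    (h0low : (σ0 - C0⁻¹ • 1).PosSemidef) (h0up : (C0 • 1 - σ0).PosSemidef)
    (hσ1 : σ1 = A.det⁻¹ • (A * σ0 * Aᵀ))
    (h1low : (σ1 - C1⁻¹ • 1).PosSemidef) (h1up : (C1 • 1 - σ1).PosSemidef) :
    ‖LinearMap.toContinuousLinearMap (Matrix.toEuclideanLin A)‖ ^ 2 ≤ (C0 * C1) * A.det := by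
  set K : ℝ := C0 * C1 * A.det with hK
  have hC0pos : (0:ℝ) < C0 := lt_of_lt_of_le one_pos hC0
  have hC1pos : (0:ℝ) < C1 := lt_of_lt_of_le one_pos hC1
  have hKpos : 0 < K := by positivity
  -- key pointwise inequality for Aᵀ
  have key : ∀ v : Fin 2 → ℝ, (Aᵀ *ᵥ v) ⬝ᵥ (Aᵀ *ᵥ v) ≤ K * (v ⬝ᵥ v) := by
    intro v
    set w : Fin 2 → ℝ := Aᵀ *ᵥ v with hw
    have h1 : v ⬝ᵥ (σ1 *ᵥ v) ≤ C1 * (v ⬝ᵥ v) := by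
      have := h1up.dotProduct_mulVec_nonneg v
      simp only [sub_mulVec, smul_mulVec, one_mulVec, dotProduct_sub,
        dotProduct_smul, star_trivial, smul_eq_mul] at this
      linarith
    have h2 : C0⁻¹ * (w ⬝ᵥ w) ≤ w ⬝ᵥ (σ0 *ᵥ w) := by
      have := h0low.dotProduct_mulVec_nonneg w
      simp only [sub_mulVec, smul_mulVec, one_mulVec, dotProduct_sub,
        dotProduct_smul, star_trivial, smul_eq_mul] at this
      linarith
    have h3 : v ⬝ᵥ (σ1 *ᵥ v) = A.det⁻¹ * (w ⬝ᵥ (σ0 *ᵥ w)) := by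
      rw [hσ1]
      simp only [smul_mulVec, dotProduct_smul, smul_eq_mul]
      congr 1
      rw [Matrix.mul_assoc, ← Matrix.mulVec_mulVec, ← Matrix.mulVec_mulVec,
        Matrix.dotProduct_mulVec, ← Matrix.mulVec_transpose]
    have h4 : w ⬝ᵥ (σ0 *ᵥ w) ≤ C1 * A.det * (v ⬝ᵥ v) := by
      have := h1
      rw [h3] at this
      have h5 : A.det⁻¹ * (w ⬝ᵥ (σ0 *ᵥ w)) * A.det ≤ C1 * (v ⬝ᵥ v) * A.det :=
        mul_le_mul_of_nonneg_right this hdet.le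
      rw [mul_comm (A.det⁻¹ * _) A.det, ← mul_assoc, mul_inv_cancel₀ hdet.ne', one_mul] at h5
      linarith
    have h6 : C0⁻¹ * (w ⬝ᵥ w) ≤ C1 * A.det * (v ⬝ᵥ v) := le_trans h2 h4
    calc w ⬝ᵥ w = C0 * (C0⁻¹ * (w ⬝ᵥ w)) := by
          rw [← mul_assoc, mul_inv_cancel₀ hC0pos.ne', one_mul]
      _ ≤ C0 * (C1 * A.det * (v ⬝ᵥ v)) := by
          exact mul_le_mul_of_nonneg_left h6 hC0pos.le
      _ = K * (v ⬝ᵥ v) := by ring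
  -- norm bound for Aᵀ
  have hnormT : ‖LinearMap.toContinuousLinearMap (Matrix.toEuclideanLin Aᵀ)‖ ≤ Real.sqrt K := by
    apply ContinuousLinearMap.opNorm_le_bound _ (Real.sqrt_nonneg K)
    intro v
    have hv2 : ‖LinearMap.toContinuousLinearMap (Matrix.toEuclideanLin Aᵀ) v‖ ^ 2
        ≤ (Real.sqrt K * ‖v‖) ^ 2 := by
      have e1 : ‖LinearMap.toContinuousLinearMap (Matrix.toEuclideanLin Aᵀ) v‖ ^ 2
          = (Aᵀ *ᵥ (WithLp.equiv 2 (Fin 2 → ℝ)) v) ⬝ᵥ (Aᵀ *ᵥ (WithLp.equiv 2 (Fin 2 → ℝ)) v) := by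
        rw [← real_inner_self_eq_norm_sq]
        rw [LinearMap.coe_toContinuousLinearMap', Matrix.toEuclideanLin_apply]
        rw [EuclideanSpace.inner_eq_star_dotProduct]
        simp [EuclideanSpace.inner_eq_star_dotProduct, dotProduct, mul_comm]
      have e2 : ‖v‖ ^ 2 = ((WithLp.equiv 2 (Fin 2 → ℝ)) v) ⬝ᵥ ((WithLp.equiv 2 (Fin 2 → ℝ)) v) := by
        rw [← real_inner_self_eq_norm_sq]
        rw [EuclideanSpace.inner_eq_star_dotProduct]
        simp [EuclideanSpace.inner_eq_star_dotProduct, dotProduct, mul_comm]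
      rw [e1, mul_pow, Real.sq_sqrt hKpos.le, e2]
      exact key _
    have h := Real.sqrt_le_sqrt hv2
    rwa [Real.sqrt_sq (norm_nonneg _),
      Real.sqrt_sq (by positivity : (0:ℝ) ≤ Real.sqrt K * ‖v‖)] at h
  -- transfer to A via adjoint
  have heq : ‖LinearMap.toContinuousLinearMap (Matrix.toEuclideanLin A)‖
      = ‖LinearMap.toContinuousLinearMap (Matrix.toEuclideanLin Aᵀ)‖ := by
    have hAT : Aᵀ = Aᴴ := by
      ext i j
      simp [Matrix.conjTranspose_apply]
    rw [hAT, Matrix.toEuclideanLin_conjTranspose_eq_adjoint,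
      LinearMap.adjoint_toContinuousLinearMap]
    exact (ContinuousLinearMap.adjoint.norm_map _).symm
  have hfinal : ‖LinearMap.toContinuousLinearMap (Matrix.toEuclideanLin A)‖ ^ 2
      ≤ Real.sqrt K ^ 2 := by
    rw [heq]
    exact pow_le_pow_left₀ (norm_nonneg _) hnormT 2
  rw [Real.sq_sqrt hKpos.le] at hfinal
  linarith
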